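/- Let n ≥ 1 be a natural number, ω ∈ ℂ, τ := 2*π*Complex.I, and M := !![1, ω; 0, τ^n] ∈ Matrix (Fin 2) (Fin 2) ℂ. Then M is invertible with M⁻¹ = !![1, −ω/τ^n; 0, τ^{−n}]; the element Σ_{k : Fin 2} (M⁻¹) 0 k ⊗ₜ[ℚ] (τ^{−n} * (M k 1)) of ℂ ⊗[ℚ] ℂ equals 1 ⊗ₜ (ω/τ^n) − (ω/τ^n) ⊗ₜ 1, so its image in Λ²_ℚ ℂ under x ⊗ₜ y ↦ x ∧ y equals 1 ∧ (2*ω/τ^n). Moreover, for every x ∈ ℂ one has 1 ∧ x = 0 in Λ²_ℚ ℂ if and only if x lies in the image of the algebra map ℚ → ℂ; consequently the ℚ-linear map ℂ → Λ²_ℚ ℂ, ω ↦ 1 ∧ (2*ω/τ^n), has kernel exactly ℚ • τ^n. -/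

import Mathlib

open scoped TensorProduct

noncomputable section

/-- The wedge product `x ∧ y` of two complex numbers, as an element of the second
exterior power `⋀[ℚ]^2 ℂ` of `ℂ` as a `ℚ`-vector space. -/
def wedge (x y : ℂ) : ⋀[ℚ]^2 ℂ :=
  ⟨ExteriorAlgebra.ιMulti ℚ 2 ![x, y],
    ExteriorAlgebra.ιMulti_range ℚ 2 ⟨![x, y], rfl⟩⟩

lemma update_zero (x y z : ℂ) : Function.update ![x, y] 0 z = ![z, y] := by
  ext i; fin_cases i <;> simp

lemma update_one (x y z : ℂ) : Function.update ![x, y] 1 z = ![x, z] := by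
  ext i; fin_cases i <;> simp

/-- The wedge product as a `ℚ`-bilinear map. -/
def wedgeBil : ℂ →ₗ[ℚ] ℂ →ₗ[ℚ] ⋀[ℚ]^2 ℂ :=
  LinearMap.mk₂ ℚ wedge
    (fun x x' y => by
      have h := (ExteriorAlgebra.ιMulti ℚ 2 (M := ℂ)).map_update_add ![x, y] 0 x x'
      apply Subtype.ext
      simpa [wedge, update_zero] using h)
    (fun q x y => by
      have h := (ExteriorAlgebra.ιMulti ℚ 2 (M := ℂ)).map_update_smul ![x, y] 0 q x
      apply Subtype.ext
      simpa [wedge, update_zero] using h)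
    (fun x y y' => by
      have h := (ExteriorAlgebra.ιMulti ℚ 2 (M := ℂ)).map_update_add ![x, y] 1 y y'
      apply Subtype.ext
      simpa [wedge, update_one] using h)
    (fun q x y => by
      have h := (ExteriorAlgebra.ιMulti ℚ 2 (M := ℂ)).map_update_smul ![x, y] 1 q y
      apply Subtype.ext
      simpa [wedge, update_one] using h)

/-- The `ℚ`-linear map `ℂ ⊗[ℚ] ℂ → ⋀[ℚ]^2 ℂ` sending `x ⊗ₜ y` to `x ∧ y`. -/
def wedgeTensor : ℂ ⊗[ℚ] ℂ →ₗ[ℚ] ⋀[ℚ]^2 ℂ :=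
  TensorProduct.lift wedgeBil


lemma wedge_swap (x y : ℂ) : wedge y x = - wedge x y := by
  have h := (ExteriorAlgebra.ιMulti ℚ 2 (M := ℂ)).map_swap ![x, y] (i := 0) (j := 1) (by decide)
  apply Subtype.ext
  have hv : ![x, y] ∘ Equiv.swap (0:Fin 2) 1 = ![y, x] := by
    funext i; fin_cases i <;> simp
  rw [hv] at h
  simpa [wedge] using h

lemma wedge_self (x : ℂ) : wedge x x = 0 := by
  apply Subtype.ext
  have h := (ExteriorAlgebra.ιMulti ℚ 2 (M := ℂ)).map_eq_zero_of_eq ![x, x]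
    (i := 0) (j := 1) (by simp) (by decide)
  simpa [wedge] using h

lemma wedge_one_eq_zero_iff (x : ℂ) :
    wedge 1 x = 0 ↔ x ∈ Set.range (algebraMap ℚ ℂ) := by
  constructor
  · intro h
    by_contra hx
    -- 1 and x are linearly independent over ℚ
    have hli : LinearIndependent ℚ ![(1:ℂ), x] := by
      rw [LinearIndependent.pair_iff' one_ne_zero]
      intro a ha
      exact hx ⟨a, by simpa [Algebra.algebraMap_eq_smul_one] using ha⟩
    have hs := (linearIndepOn_id_range_iff hli.injective).mpr hli
    set B := Module.Basis.extend hs with hB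
    have h1mem : (1:ℂ) ∈ hs.extend (Set.subset_univ _) :=
      hs.subset_extend _ ⟨0, rfl⟩
    have hxmem : x ∈ hs.extend (Set.subset_univ _) :=
      hs.subset_extend _ ⟨1, rfl⟩
    set i1 : hs.extend (Set.subset_univ _) := ⟨1, h1mem⟩
    set i2 : hs.extend (Set.subset_univ _) := ⟨x, hxmem⟩
    have hne : i1 ≠ i2 := by
      intro hEq
      apply hx
      have : (1:ℂ) = x := congrArg Subtype.val hEq
      exact ⟨1, by simpa using this⟩
    -- linear functionals
    set φ : ℂ →ₗ[ℚ] ℚ := B.coord i1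
    set ψ : ℂ →ₗ[ℚ] ℚ := B.coord i2
    have hφ1 : φ 1 = 1 := by
      have : B i1 = 1 := Module.Basis.extend_apply_self hs i1
      simp [φ, ← this, Module.Basis.coord_apply, Module.Basis.repr_self]
    have hψ1 : ψ 1 = 0 := by
      have hb : B i1 = 1 := Module.Basis.extend_apply_self hs i1
      calc ψ 1 = ψ (B i1) := by rw [hb]
        _ = (Finsupp.single i1 (1:ℚ)) i2 := by simp [ψ, Module.Basis.coord_apply, Module.Basis.repr_self]
        _ = 0 := Finsupp.single_eq_of_ne hne.symm
    have hφx : φ x = 0 := by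
      have hb : B i2 = x := Module.Basis.extend_apply_self hs i2
      calc φ x = φ (B i2) := by rw [hb]
        _ = (Finsupp.single i2 (1:ℚ)) i1 := by simp [φ, Module.Basis.coord_apply, Module.Basis.repr_self]
        _ = 0 := Finsupp.single_eq_of_ne hne
    have hψx : ψ x = 1 := by
      have : B i2 = x := Module.Basis.extend_apply_self hs i2
      simp [ψ, ← this, Module.Basis.coord_apply, Module.Basis.repr_self]
    -- the alternating map detecting (1, x)
    set L : ℂ →ₗ[ℚ] (Fin 2 → ℚ) := LinearMap.pi ![φ, ψ]
    set f : ℂ [⋀^Fin 2]→ₗ[ℚ] ℚ := Matrix.detRowAlternating.compLinearMap L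
    have hf : f ![1, x] = 1 := by
      have : f ![1, x] = Matrix.det (Matrix.of (fun i => L (![1, x] i))) := rfl
      rw [this, Matrix.det_fin_two]
      simp [L, hφ1, hψ1, hφx, hψx]
    set g : ∀ i, ℂ [⋀^Fin i]→ₗ[ℚ] ℚ := Function.update (fun _ => 0) 2 f
    have hval : ExteriorAlgebra.ιMulti ℚ 2 ![(1:ℂ), x] = 0 := congrArg Subtype.val h
    have := ExteriorAlgebra.liftAlternating_apply_ιMulti g ![(1:ℂ), x]
    rw [hval, map_zero] at this
    have hg2 : g 2 = f := by simp [g]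
    rw [hg2, hf] at this
    exact one_ne_zero this.symm
  · rintro ⟨q, rfl⟩
    have h1 : (algebraMap ℚ ℂ) q = q • (1:ℂ) := Algebra.algebraMap_eq_smul_one q
    rw [h1, show wedge 1 (q • (1:ℂ)) = wedgeBil 1 (q • (1:ℂ)) from rfl, map_smul]
    rw [show wedgeBil 1 (1:ℂ) = wedge 1 1 from rfl, wedge_self, smul_zero]


theorem period_of_rank_two_extension (n : ℕ) (hn : 1 ≤ n) (ω : ℂ) :
    letI τ : ℂ := 2 * Real.pi * Complex.I
    letI M : Matrix (Fin 2) (Fin 2) ℂ := !![1, ω; 0, τ ^ n]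
    IsUnit M ∧
      M⁻¹ = !![1, -ω / τ ^ n; 0, (τ ^ n)⁻¹] ∧
      (∑ k : Fin 2, (M⁻¹ 0 k) ⊗ₜ[ℚ] ((τ ^ n)⁻¹ * M k 1)) =
        1 ⊗ₜ[ℚ] (ω / τ ^ n) - (ω / τ ^ n) ⊗ₜ[ℚ] 1 ∧
      wedgeTensor (∑ k : Fin 2, (M⁻¹ 0 k) ⊗ₜ[ℚ] ((τ ^ n)⁻¹ * M k 1)) =
        wedge 1 (2 * ω / τ ^ n) ∧
      (∀ x : ℂ, wedge 1 x = 0 ↔ x ∈ Set.range (algebraMap ℚ ℂ)) ∧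
      LinearMap.ker ((wedgeBil 1).comp (LinearMap.mulLeft ℚ (2 / τ ^ n))) =
        Submodule.span ℚ {τ ^ n} := by
  have hτ : (2 * (Real.pi:ℂ) * Complex.I) ≠ 0 := by
    simp [Real.pi_ne_zero, Complex.I_ne_zero]
  have hτn : (2 * (Real.pi:ℂ) * Complex.I) ^ n ≠ 0 := pow_ne_zero n hτ
  set τ : ℂ := 2 * Real.pi * Complex.I with hτdef
  set M : Matrix (Fin 2) (Fin 2) ℂ := !![1, ω; 0, τ ^ n] with hMdef
  have hdet : M.det = τ ^ n := by simp [hMdef, Matrix.det_fin_two_of]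
  have hU : IsUnit M := by
    rw [Matrix.isUnit_iff_isUnit_det, hdet]
    exact hτn.isUnit
  have hMinv : M⁻¹ = !![1, -ω / τ ^ n; 0, (τ ^ n)⁻¹] := by
    apply Matrix.inv_eq_right_inv
    ext i j
    fin_cases i <;> fin_cases j <;>
      simp [hMdef, Matrix.mul_apply, Fin.sum_univ_two] <;>
      field_simp <;> ring
  have hsum : (∑ k : Fin 2, (M⁻¹ 0 k) ⊗ₜ[ℚ] ((τ ^ n)⁻¹ * M k 1)) =
      1 ⊗ₜ[ℚ] (ω / τ ^ n) - (ω / τ ^ n) ⊗ₜ[ℚ] 1 := by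
    rw [Fin.sum_univ_two, hMinv]
    have e0 : ((τ:ℂ) ^ n)⁻¹ * ω = ω / τ ^ n := by rw [inv_mul_eq_div]
    have e1 : ((τ:ℂ) ^ n)⁻¹ * (τ ^ n) = 1 := inv_mul_cancel₀ hτn
    have a00 : !![(1:ℂ), -ω / τ ^ n; 0, (τ ^ n)⁻¹] 0 0 = 1 := by simp
    have a01 : !![(1:ℂ), -ω / τ ^ n; 0, (τ ^ n)⁻¹] 0 1 = -ω / τ ^ n := by simp
    have m01 : M 0 1 = ω := by simp [hMdef]
    have m11 : M 1 1 = τ ^ n := by simp [hMdef]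
    rw [a00, a01, m01, m11, e0, e1, show (-ω / τ ^ n : ℂ) = -(ω / τ ^ n) by ring,
      TensorProduct.neg_tmul, sub_eq_add_neg]
  have hx2 : (2 * ω / τ ^ n : ℂ) = (2:ℚ) • (ω / τ ^ n) := by
    rw [Rat.smul_def]; push_cast; ring
  have hwedge2 : wedge 1 (2 * ω / τ ^ n) = wedge 1 (ω / τ ^ n) + wedge 1 (ω / τ ^ n) := by
    rw [hx2, show wedge 1 ((2:ℚ) • (ω / τ ^ n : ℂ)) = wedgeBil 1 ((2:ℚ) • (ω / τ ^ n : ℂ)) from rfl,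
      map_smul, two_smul]
    rfl
  refine ⟨hU, hMinv, hsum, ?_, wedge_one_eq_zero_iff, ?_⟩
  · rw [hsum, map_sub]
    have t1 : wedgeTensor ((1:ℂ) ⊗ₜ[ℚ] (ω / τ ^ n)) = wedge 1 (ω / τ ^ n) := rfl
    have t2 : wedgeTensor ((ω / τ ^ n : ℂ) ⊗ₜ[ℚ] 1) = wedge (ω / τ ^ n) 1 := rfl
    rw [t1, t2, wedge_swap 1 (ω / τ ^ n)]
    rw [hwedge2, sub_neg_eq_add]
  · clear_value τ
    ext z
    simp only [LinearMap.mem_ker, LinearMap.comp_apply, LinearMap.mulLeft_apply,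
      Submodule.mem_span_singleton]
    rw [show wedgeBil 1 (2 / τ ^ n * z) = wedge 1 (2 / τ ^ n * z) from rfl,
      wedge_one_eq_zero_iff]
    constructor
    · rintro ⟨q, hq⟩
      refine ⟨q / 2, ?_⟩
      have hq0 : (q:ℂ) = 2 / τ ^ n * z := by rw [← hq]; simp
      have hq' : (q:ℂ) * τ ^ n = 2 * z := by
        field_simp at hq0
        linear_combination hq0
      rw [Rat.smul_def]
      push_cast
      linear_combination hq' / 2
    · rintro ⟨a, rfl⟩
      refine ⟨2 * a, ?_⟩
      have ha : (2:ℂ) / τ ^ n * ((a:ℂ) * τ ^ n) = 2 * a := by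
        field_simp
      rw [Rat.smul_def, ha]
      norm_cast


end
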